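/- Positivity of the principal eigenvalue implies the weak maximum principle: let 𝓛 be a uniformly elliptic second-order linear operator with bounded continuous coefficients on a bounded domain Ω ⊂ ℝ². If λ₁(𝓛,Ω) > 0, then every w ∈ C²(Ω) ∩ C(closure(Ω)) with 𝓛w ≥ 0 in Ω and w ≤ 0 on ∂Ω satisfies w ≤ 0 in Ω. -/

import Mathlib

open Set MeasureTheory

/-- Partial derivative in the first (horizontal) variable. -/
noncomputable def pdx (f : ℝ × ℝ → ℝ) (z : ℝ × ℝ) : ℝ := fderiv ℝ f z (1, 0)

/-- Partial derivative in the second (vertical) variable. -/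
noncomputable def pdy (f : ℝ × ℝ → ℝ) (z : ℝ × ℝ) : ℝ := fderiv ℝ f z (0, 1)

/-- The general second-order linear differential operator
`𝓛φ = Σ aᵢⱼ ∂ᵢ∂ⱼ φ + Σ bᵢ ∂ᵢ φ + c₀ φ`. -/
noncomputable def Lop (a11 a12 a21 a22 b1 b2 c0 : ℝ × ℝ → ℝ)
    (φ : ℝ × ℝ → ℝ) (z : ℝ × ℝ) : ℝ :=
  a11 z * pdx (pdx φ) z + a12 z * pdx (pdy φ) z + a21 z * pdy (pdx φ) z
    + a22 z * pdy (pdy φ) z + b1 z * pdx φ z + b2 z * pdy φ z + c0 z * φ z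

/-- The principal eigenvalue of an operator `T` on a domain `Ω`:
`λ₁ = sup {λ : ∃ φ > 0 in Ω with (𝓛 + λ)φ ≤ 0 in Ω}`. -/
noncomputable def lam1 (T : (ℝ × ℝ → ℝ) → ℝ × ℝ → ℝ) (Ω : Set (ℝ × ℝ)) : ℝ :=
  sSup {lam : ℝ | ∃ φ : ℝ × ℝ → ℝ, ContDiffOn ℝ 2 φ Ω ∧ (∀ z ∈ Ω, 0 < φ z) ∧
    ∀ z ∈ Ω, T φ z + lam * φ z ≤ 0}

section Aux

/-- discriminant of a nonneg quadratic form -/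
lemma psd_disc {p r q : ℝ} (h : ∀ ξ₁ ξ₂ : ℝ, 0 ≤ p*ξ₁^2 + 2*r*ξ₁*ξ₂ + q*ξ₂^2) : r^2 ≤ p*q := by
  by_contra hlt
  push_neg at hlt
  have hp := h 1 0
  have hq := h 0 1
  have h1 := h q (-r)
  have h2 := h (-r) p
  have hq0 : q = 0 := by nlinarith
  have hp0 : p = 0 := by nlinarith
  have h3 := h 1 1
  have h4 := h 1 (-1)
  nlinarith

lemma trace_nonpos {p r q a₀ x y z : ℝ}
    (hform : ∀ ξ₁ ξ₂ : ℝ, a₀*(ξ₁^2+ξ₂^2) ≤ p*ξ₁^2 + 2*r*ξ₁*ξ₂ + q*ξ₂^2)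
    (hx : x ≤ 0) (hz : z ≤ 0) (hy : y^2 ≤ x*z) :
    p*x + 2*r*y + q*z ≤ a₀*(x+z) := by
  have hd : r^2 ≤ (p - a₀)*(q - a₀) := by
    apply psd_disc
    intro ξ₁ ξ₂
    have := hform ξ₁ ξ₂; nlinarith
  have hp : 0 ≤ p - a₀ := by have := hform 1 0; nlinarith
  have hq : 0 ≤ q - a₀ := by have := hform 0 1; nlinarith
  have key : (p - a₀)*x + 2*r*y + (q - a₀)*z ≤ 0 := by
    nlinarith [sq_nonneg ((p-a₀)*x - (q-a₀)*z), mul_nonneg hp hq,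
      mul_nonneg (mul_nonneg hp hq) (sub_nonneg.2 hy),
      mul_nonneg (sub_nonneg.2 hd) (sq_nonneg y),
      mul_nonpos_of_nonneg_of_nonpos hp hx, mul_nonpos_of_nonneg_of_nonpos hq hz,
      sq_nonneg (r*y), sq_nonneg ((p-a₀)*x + (q-a₀)*z + 2*r*y)]
  nlinarith

lemma trace_nonneg {p r q a₀ x y z : ℝ}
    (hform : ∀ ξ₁ ξ₂ : ℝ, a₀*(ξ₁^2+ξ₂^2) ≤ p*ξ₁^2 + 2*r*ξ₁*ξ₂ + q*ξ₂^2)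
    (hx : 0 ≤ x) (hz : 0 ≤ z) (hy : y^2 ≤ x*z) :
    a₀*(x+z) ≤ p*x + 2*r*y + q*z := by
  have := trace_nonpos (x := -x) (y := -y) (z := -z) hform (by linarith) (by linarith)
    (by nlinarith)
  nlinarith

lemma nsd_of_forall {x y z : ℝ} (h : ∀ ξ₁ ξ₂ : ℝ, x*ξ₁^2 + 2*y*ξ₁*ξ₂ + z*ξ₂^2 ≤ 0) :
    x ≤ 0 ∧ z ≤ 0 ∧ y^2 ≤ x*z := by
  have h' : ∀ ξ₁ ξ₂ : ℝ, 0 ≤ (-x)*ξ₁^2 + 2*(-y)*ξ₁*ξ₂ + (-z)*ξ₂^2 := by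
    intro ξ₁ ξ₂; have := h ξ₁ ξ₂; nlinarith
  have hd := psd_disc h'
  have hx := h 1 0
  have hz := h 0 1
  exact ⟨by nlinarith, by nlinarith, by nlinarith⟩

/-- 1D second derivative test at a local max. -/
lemma deriv2_nonpos_at_localmax {g g' : ℝ → ℝ} {g'' : ℝ}
    (hd : ∀ᶠ t in nhds (0:ℝ), HasDerivAt g (g' t) t)
    (hd2 : HasDerivAt g' g'' 0)
    (hmax : IsLocalMax g 0) : g'' ≤ 0 := by
  by_contra hpos
  push_neg at hpos
  have hg'0 : g' 0 = 0 := by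
    have h1 : deriv g 0 = g' 0 := hd.self_of_nhds.deriv
    have h2 : deriv g 0 = 0 := hmax.deriv_eq_zero
    rw [h1] at h2; exact h2
  -- eventually positive slope of g'
  have hslope := hasDerivAt_iff_tendsto_slope.mp hd2
  have hev : ∀ᶠ t in nhdsWithin (0:ℝ) {(0:ℝ)}ᶜ, 0 < slope g' 0 t :=
    hslope.eventually (eventually_gt_nhds hpos)
  obtain ⟨r, hr, hball⟩ := Metric.mem_nhdsWithin_iff.mp hev
  -- get δ with derivative and max property
  have hcomb : ∀ᶠ t in nhds (0:ℝ), HasDerivAt g (g' t) t ∧ g t ≤ g 0 := hd.and hmax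
  obtain ⟨δ, hδ, hδp⟩ := Metric.eventually_nhds_iff.mp hcomb
  set t0 : ℝ := min r δ / 2 with ht0def
  have ht0 : 0 < t0 := by positivity
  have ht0r : t0 < r := by
    have : min r δ ≤ r := min_le_left _ _
    linarith
  have ht0δ : t0 < δ := by
    have : min r δ ≤ δ := min_le_right _ _
    linarith
  have hIcc : ∀ x ∈ Icc (0:ℝ) t0, HasDerivAt g (g' x) x := by
    intro x hx
    apply (hδp _).1
    rw [Real.dist_eq, sub_zero, abs_of_nonneg hx.1]
    linarith [hx.2]
  obtain ⟨c, hc, hceq⟩ := exists_hasDerivAt_eq_slope g g' ht0 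
    (fun x hx => (hIcc x hx).continuousAt.continuousWithinAt)
    (fun x hx => hIcc x ⟨hx.1.le, hx.2.le⟩)
  have hgt0 : g t0 ≤ g 0 := by
    refine (hδp ?_).2
    rw [Real.dist_eq, sub_zero, abs_of_pos ht0]; exact ht0δ
  have hc' : g' c ≤ 0 := by
    rw [hceq]
    apply div_nonpos_of_nonpos_of_nonneg <;> linarith
  have hcball : c ∈ Metric.ball (0:ℝ) r ∩ {(0:ℝ)}ᶜ := by
    constructor
    · rw [Metric.mem_ball, Real.dist_eq, sub_zero, abs_of_pos hc.1]
      linarith [hc.2]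
    · simp only [mem_compl_iff, mem_singleton_iff]
      exact ne_of_gt hc.1
  have := hball hcball
  simp only [mem_setOf_eq] at this
  rw [slope_def_field, hg'0] at this
  have : 0 < g' c / c := by simpa using this
  rcases div_pos_iff.mp this with ⟨h1,h2⟩|⟨h1,h2⟩
  · linarith
  · linarith [hc.1]

open Filter


section Hess
variable {U : Set (ℝ×ℝ)} {f : ℝ×ℝ → ℝ} {z : ℝ×ℝ}

lemma fderiv_diffAt (hU : IsOpen U) (hf : ContDiffOn ℝ 2 f U) (hz : z ∈ U) :
    DifferentiableAt ℝ (fderiv ℝ f) z := by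
  have h1 : ContDiffOn ℝ 1 (fderiv ℝ f) U := hf.fderiv_of_isOpen hU (by norm_num)
  exact (h1.differentiableOn one_ne_zero).differentiableAt (hU.mem_nhds hz)

lemma hasFDeriv_ev (hU : IsOpen U) (hf : ContDiffOn ℝ 2 f U) (hz : z ∈ U) :
    ∀ᶠ y in nhds z, HasFDerivAt f (fderiv ℝ f y) y := by
  filter_upwards [hU.mem_nhds hz] with y hy
  exact ((hf.differentiableOn two_ne_zero).differentiableAt (hU.mem_nhds hy)).hasFDerivAt

lemma second_partial (hU : IsOpen U) (hf : ContDiffOn ℝ 2 f U) (hz : z ∈ U) (u v : ℝ×ℝ) :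
    fderiv ℝ (fun w => fderiv ℝ f w u) z v = (fderiv ℝ (fderiv ℝ f) z v) u := by
  have hdF := (fderiv_diffAt hU hf hz).hasFDerivAt
  have h := ((ContinuousLinearMap.apply ℝ ℝ u).hasFDerivAt.comp z hdF)
  have heq : (fun w => fderiv ℝ f w u)
      = (⇑(ContinuousLinearMap.apply ℝ ℝ u) ∘ fderiv ℝ f) := rfl
  rw [heq, h.fderiv]
  rfl

lemma second_partial_symm (hU : IsOpen U) (hf : ContDiffOn ℝ 2 f U) (hz : z ∈ U) (u v : ℝ×ℝ) :
    (fderiv ℝ (fderiv ℝ f) z u) v = (fderiv ℝ (fderiv ℝ f) z v) u :=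
  second_derivative_symmetric_of_eventually (hasFDeriv_ev hU hf hz)
    (fderiv_diffAt hU hf hz).hasFDerivAt u v

lemma dir_deriv_ev (hU : IsOpen U) (hf : ContDiffOn ℝ 2 f U) (hz : z ∈ U) (ξ : ℝ×ℝ) :
    (∀ᶠ t in nhds (0:ℝ), HasDerivAt (fun s : ℝ => f (z + s • ξ)) (fderiv ℝ f (z + t • ξ) ξ) t)
    ∧ HasDerivAt (fun t : ℝ => fderiv ℝ f (z + t • ξ) ξ) ((fderiv ℝ (fderiv ℝ f) z ξ) ξ) 0 := by
  have hℓd : ∀ t : ℝ, HasDerivAt (fun s : ℝ => z + s • ξ) ξ t := by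
    intro t
    simpa using ((hasDerivAt_id t).smul_const ξ).const_add z
  have hℓc : Continuous (fun s : ℝ => z + s • ξ) := by fun_prop
  have hℓ0 : z + (0:ℝ) • ξ = z := by simp
  have htd : Filter.Tendsto (fun s : ℝ => z + s • ξ) (nhds 0) (nhds z) := by
    simpa [hℓ0] using hℓc.tendsto 0
  constructor
  · have hevU : ∀ᶠ t in nhds (0:ℝ), z + t • ξ ∈ U := htd.eventually (hU.mem_nhds hz)
    filter_upwards [hevU] with t ht
    have hF : HasFDerivAt f (fderiv ℝ f (z + t • ξ)) (z + t • ξ) :=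
      ((hf.differentiableOn two_ne_zero).differentiableAt (hU.mem_nhds ht)).hasFDerivAt
    exact hF.comp_hasDerivAt t (hℓd t)
  · have hdF := (fderiv_diffAt hU hf hz).hasFDerivAt
    have hdF' : HasFDerivAt (fderiv ℝ f) (fderiv ℝ (fderiv ℝ f) z) (z + (0:ℝ) • ξ) := by
      rw [hℓ0]; exact hdF
    have h1 : HasDerivAt (fun t : ℝ => fderiv ℝ f (z + t • ξ))
        ((fderiv ℝ (fderiv ℝ f) z) ξ) 0 := by
      simpa [Function.comp_def] using hdF'.comp_hasDerivAt 0 (hℓd 0)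
    have := (ContinuousLinearMap.apply ℝ ℝ ξ).hasFDerivAt.comp_hasDerivAt 0 h1
    simpa [Function.comp_def, ContinuousLinearMap.apply_apply] using this

lemma hessian_nsd_at_localmax (hU : IsOpen U) (hf : ContDiffOn ℝ 2 f U) (hz : z ∈ U)
    (hmax : IsLocalMax f z) (ξ : ℝ×ℝ) :
    (fderiv ℝ (fderiv ℝ f) z ξ) ξ ≤ 0 := by
  obtain ⟨h1, h2⟩ := dir_deriv_ev hU hf hz ξ
  apply deriv2_nonpos_at_localmax h1 h2
  have htd : Filter.Tendsto (fun s : ℝ => z + s • ξ) (nhds 0) (nhds z) := by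
    have hℓc : Continuous (fun s : ℝ => z + s • ξ) := by fun_prop
    simpa using hℓc.tendsto 0
  have := htd.eventually hmax
  simpa [IsLocalMax, IsMaxFilter] using this

lemma hessian_psd_at_localmin (hU : IsOpen U) (hf : ContDiffOn ℝ 2 f U) (hz : z ∈ U)
    (hmin : IsLocalMin f z) (ξ : ℝ×ℝ) :
    0 ≤ (fderiv ℝ (fderiv ℝ f) z ξ) ξ := by
  obtain ⟨h1, h2⟩ := dir_deriv_ev hU hf hz ξ
  have key : -((fderiv ℝ (fderiv ℝ f) z ξ) ξ) ≤ 0 := by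
    apply deriv2_nonpos_at_localmax (g := fun t => -(f (z + t • ξ)))
      (g' := fun t => -(fderiv ℝ f (z + t • ξ) ξ))
    · filter_upwards [h1] with t ht using ht.neg
    · exact h2.neg
    · have htd : Filter.Tendsto (fun s : ℝ => z + s • ξ) (nhds 0) (nhds z) := by
        have hℓc : Continuous (fun s : ℝ => z + s • ξ) := by fun_prop
        simpa using hℓc.tendsto 0
      have := htd.eventually hmin
      change ∀ᶠ t in nhds (0:ℝ), f z ≤ f (z + t • ξ) at this
      simpa [IsLocalMax, IsMaxFilter] using this.mono (fun t ht => neg_le_neg ht)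
  linarith

lemma hess_quadratic (hU : IsOpen U) (hf : ContDiffOn ℝ 2 f U) (hz : z ∈ U) (s t : ℝ) :
    (fderiv ℝ (fderiv ℝ f) z (s,t)) (s,t)
      = s^2 * pdx (pdx f) z + s*t*(pdx (pdy f) z + pdy (pdx f) z) + t^2 * pdy (pdy f) z := by
  have e1 : pdx (pdx f) z = (fderiv ℝ (fderiv ℝ f) z (1,0)) (1,0) :=
    second_partial hU hf hz (1,0) (1,0)
  have e2 : pdx (pdy f) z = (fderiv ℝ (fderiv ℝ f) z (1,0)) (0,1) :=
    second_partial hU hf hz (0,1) (1,0)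
  have e3 : pdy (pdx f) z = (fderiv ℝ (fderiv ℝ f) z (0,1)) (1,0) :=
    second_partial hU hf hz (1,0) (0,1)
  have e4 : pdy (pdy f) z = (fderiv ℝ (fderiv ℝ f) z (0,1)) (0,1) :=
    second_partial hU hf hz (0,1) (0,1)
  have hst : ((s,t) : ℝ×ℝ) = s • ((1:ℝ),(0:ℝ)) + t • ((0:ℝ),(1:ℝ)) := by
    simp [Prod.ext_iff]
  rw [e1, e2, e3, e4, hst]
  simp only [map_add, _root_.map_smul, ContinuousLinearMap.add_apply, ContinuousLinearMap.coe_smul',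
    Pi.smul_apply, smul_eq_mul]
  ring

lemma pdxy_symm (hU : IsOpen U) (hf : ContDiffOn ℝ 2 f U) (hz : z ∈ U) :
    pdx (pdy f) z = pdy (pdx f) z := by
  have e2 : pdx (pdy f) z = (fderiv ℝ (fderiv ℝ f) z (1,0)) (0,1) :=
    second_partial hU hf hz (0,1) (1,0)
  have e3 : pdy (pdx f) z = (fderiv ℝ (fderiv ℝ f) z (0,1)) (1,0) :=
    second_partial hU hf hz (1,0) (0,1)
  rw [e2, e3, second_partial_symm hU hf hz]

/-- packaged Hessian conditions at an interior local max -/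
lemma hess_package_max (hU : IsOpen U) (hf : ContDiffOn ℝ 2 f U) (hz : z ∈ U)
    (hmax : IsLocalMax f z) :
    pdx f z = 0 ∧ pdy f z = 0 ∧ pdx (pdy f) z = pdy (pdx f) z ∧
    pdx (pdx f) z ≤ 0 ∧ pdy (pdy f) z ≤ 0 ∧
    (pdy (pdx f) z)^2 ≤ pdx (pdx f) z * pdy (pdy f) z := by
  have hg := hmax.fderiv_eq_zero
  have hQ : ∀ s t : ℝ, pdx (pdx f) z * s^2 + 2 * pdy (pdx f) z * (s*t) + pdy (pdy f) z * t^2 ≤ 0 := by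
    intro s t
    have := hessian_nsd_at_localmax hU hf hz hmax (s,t)
    rw [hess_quadratic hU hf hz s t] at this
    rw [pdxy_symm hU hf hz] at this
    nlinarith [this]
  obtain ⟨hx, hz', hy⟩ := nsd_of_forall (x := pdx (pdx f) z) (y := pdy (pdx f) z)
    (z := pdy (pdy f) z) (by intro s t; have := hQ s t; nlinarith)
  exact ⟨by simp [pdx, hg], by simp [pdy, hg], pdxy_symm hU hf hz, hx, hz', hy⟩

/-- packaged Hessian conditions at an interior local min -/
lemma hess_package_min (hU : IsOpen U) (hf : ContDiffOn ℝ 2 f U) (hz : z ∈ U)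
    (hmin : IsLocalMin f z) :
    pdx f z = 0 ∧ pdy f z = 0 ∧ pdx (pdy f) z = pdy (pdx f) z ∧
    0 ≤ pdx (pdx f) z ∧ 0 ≤ pdy (pdy f) z ∧
    (pdy (pdx f) z)^2 ≤ pdx (pdx f) z * pdy (pdy f) z := by
  have hg := hmin.fderiv_eq_zero
  have hQ : ∀ s t : ℝ, 0 ≤ pdx (pdx f) z * s^2 + 2 * pdy (pdx f) z * (s*t) + pdy (pdy f) z * t^2 := by
    intro s t
    have := hessian_psd_at_localmin hU hf hz hmin (s,t)
    rw [hess_quadratic hU hf hz s t] at this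
    rw [pdxy_symm hU hf hz] at this
    nlinarith [this]
  obtain ⟨hx, hz', hy⟩ := nsd_of_forall (x := -pdx (pdx f) z) (y := -pdy (pdx f) z)
    (z := -pdy (pdy f) z) (by intro s t; have := hQ s t; nlinarith)
  refine ⟨by simp [pdx, hg], by simp [pdy, hg], pdxy_symm hU hf hz, by linarith, by linarith, by nlinarith⟩

end Hess

section Linearity
variable {U : Set (ℝ×ℝ)} {f g : ℝ×ℝ → ℝ} {α β : ℝ}

lemma pd_comb (hU : IsOpen U) (hf : ContDiffOn ℝ 2 f U) (hg : ContDiffOn ℝ 2 g U) (u : ℝ×ℝ)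
    {z : ℝ×ℝ} (hz : z ∈ U) :
    fderiv ℝ (fun w => α * f w + β * g w) z u = α * fderiv ℝ f z u + β * fderiv ℝ g z u := by
  have hdf := (hf.differentiableOn two_ne_zero).differentiableAt (hU.mem_nhds hz)
  have hdg := (hg.differentiableOn two_ne_zero).differentiableAt (hU.mem_nhds hz)
  rw [fderiv_fun_add ((hdf.const_mul α)) ((hdg.const_mul β)), fderiv_const_mul hdf,
    fderiv_const_mul hdg]
  simp

lemma pd_diffAt (hU : IsOpen U) (hf : ContDiffOn ℝ 2 f U) (u : ℝ×ℝ) {z : ℝ×ℝ} (hz : z ∈ U) :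
    DifferentiableAt ℝ (fun w => fderiv ℝ f w u) z := by
  have h := ((ContinuousLinearMap.apply ℝ ℝ u).hasFDerivAt.comp z
    (fderiv_diffAt hU hf hz).hasFDerivAt)
  exact h.differentiableAt

lemma pdd_comb (hU : IsOpen U) (hf : ContDiffOn ℝ 2 f U) (hg : ContDiffOn ℝ 2 g U) (u v : ℝ×ℝ)
    {z : ℝ×ℝ} (hz : z ∈ U) :
    fderiv ℝ (fun w => fderiv ℝ (fun w' => α * f w' + β * g w') w u) z v
      = α * fderiv ℝ (fun w => fderiv ℝ f w u) z v + β * fderiv ℝ (fun w => fderiv ℝ g w u) z v := by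
  have hev : (fun w => fderiv ℝ (fun w' => α * f w' + β * g w') w u)
      =ᶠ[nhds z] (fun w => α * fderiv ℝ f w u + β * fderiv ℝ g w u) := by
    filter_upwards [hU.mem_nhds hz] with w hw using pd_comb hU hf hg u hw
  rw [hev.fderiv_eq]
  have hdf := pd_diffAt hU hf u hz
  have hdg := pd_diffAt hU hg u hz
  rw [fderiv_fun_add ((hdf.const_mul α)) ((hdg.const_mul β)), fderiv_const_mul hdf,
    fderiv_const_mul hdg]
  simp

lemma Lop_comb (A11 A12 A21 A22 B1 B2 C0 : ℝ×ℝ→ℝ) (hU : IsOpen U)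
    (hf : ContDiffOn ℝ 2 f U) (hg : ContDiffOn ℝ 2 g U) {z : ℝ×ℝ} (hz : z ∈ U) :
    Lop A11 A12 A21 A22 B1 B2 C0 (fun w => α * f w + β * g w) z
      = α * Lop A11 A12 A21 A22 B1 B2 C0 f z + β * Lop A11 A12 A21 A22 B1 B2 C0 g z := by
  have hpdx : ∀ h : ℝ×ℝ→ℝ, pdx h = fun w => fderiv ℝ h w (1,0) := fun _ => rfl
  have hpdy : ∀ h : ℝ×ℝ→ℝ, pdy h = fun w => fderiv ℝ h w (0,1) := fun _ => rfl
  simp only [Lop, pdx, pdy, hpdx, hpdy]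
  rw [pdd_comb hU hf hg (1,0) (1,0) hz, pdd_comb hU hf hg (0,1) (1,0) hz,
    pdd_comb hU hf hg (1,0) (0,1) hz, pdd_comb hU hf hg (0,1) (0,1) hz,
    pd_comb hU hf hg (1,0) hz, pd_comb hU hf hg (0,1) hz]
  ring

end Linearity

section LinFun

lemma linfun_hasFDeriv (p : ℝ×ℝ) (w : ℝ×ℝ) :
    HasFDerivAt (fun q : ℝ×ℝ => p.1 * q.1 + p.2 * q.2)
      (p.1 • (ContinuousLinearMap.fst ℝ ℝ ℝ) + p.2 • (ContinuousLinearMap.snd ℝ ℝ ℝ)) w :=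
  (hasFDerivAt_fst.const_mul p.1).add (hasFDerivAt_snd.const_mul p.2)

lemma linfun_fderiv_apply (p : ℝ×ℝ) (w u : ℝ×ℝ) :
    fderiv ℝ (fun q : ℝ×ℝ => p.1 * q.1 + p.2 * q.2) w u = p.1 * u.1 + p.2 * u.2 := by
  rw [(linfun_hasFDeriv p w).fderiv]
  simp

lemma linfun_contDiffOn (p : ℝ×ℝ) (U : Set (ℝ×ℝ)) :
    ContDiffOn ℝ 2 (fun q : ℝ×ℝ => p.1 * q.1 + p.2 * q.2) U :=
  (((contDiff_const.mul contDiff_fst).add (contDiff_const.mul contDiff_snd))).contDiffOn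

lemma linfun_pdd (p u v w : ℝ×ℝ) :
    fderiv ℝ (fun q => fderiv ℝ (fun q' : ℝ×ℝ => p.1*q'.1 + p.2*q'.2) q u) w v = 0 := by
  have hconst : (fun q : ℝ×ℝ => fderiv ℝ (fun q' : ℝ×ℝ => p.1*q'.1 + p.2*q'.2) q u)
      = fun _ => (p.1*u.1 + p.2*u.2) := by
    funext q; exact linfun_fderiv_apply p q u
  rw [hconst, fderiv_fun_const]
  simp

end LinFun

lemma clm_det_eq (T : (ℝ×ℝ) →L[ℝ] (ℝ×ℝ)) :
    ContinuousLinearMap.det T = (T (1,0)).1 * (T (0,1)).2 - (T (0,1)).1 * (T (1,0)).2 := by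
  have h0 : ContinuousLinearMap.det T = LinearMap.det (T : (ℝ×ℝ) →ₗ[ℝ] (ℝ×ℝ)) := rfl
  rw [h0, ← LinearMap.det_toMatrix (Module.Basis.finTwoProd ℝ), Matrix.det_fin_two]
  simp [LinearMap.toMatrix_apply, Module.Basis.finTwoProd]
set_option maxHeartbeats 1000000 in
lemma measurableSet_le_on {D : Set (ℝ×ℝ)} (hD : IsOpen D) {h1 h2 : ℝ×ℝ→ℝ}
    (h1c : ContinuousOn h1 D) (h2c : ContinuousOn h2 D) :
    MeasurableSet {z | z ∈ D ∧ h1 z ≤ h2 z} := by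
  have hopen : IsOpen (D ∩ (fun z => h2 z - h1 z)⁻¹' (Iio 0)) :=
    (h2c.sub h1c).isOpen_inter_preimage hD isOpen_Iio
  have hset : {z | z ∈ D ∧ h1 z ≤ h2 z} = D \ (D ∩ (fun z => h2 z - h1 z)⁻¹' (Iio 0)) := by
    ext z
    by_cases hz : z ∈ D <;> simp [hz, mem_diff, mem_preimage] <;> intros <;> linarith
  rw [hset]
  exact hD.measurableSet.diff hopen.measurableSet

lemma second_partials_sub_linear {U : Set (ℝ×ℝ)} (hU : IsOpen U) {f : ℝ×ℝ→ℝ}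
    (hf : ContDiffOn ℝ 2 f U) (p : ℝ×ℝ) {z : ℝ×ℝ} (hz : z ∈ U) (u v : ℝ×ℝ) :
    fderiv ℝ (fun w => fderiv ℝ (fun w' => f w' - (p.1*w'.1 + p.2*w'.2)) w u) z v
      = fderiv ℝ (fun w => fderiv ℝ f w u) z v := by
  have hveq : (fun w' => f w' - (p.1*w'.1 + p.2*w'.2))
      = fun w' => 1 * f w' + (-1) * (p.1*w'.1 + p.2*w'.2) := by funext w'; ring
  rw [hveq, pdd_comb hU hf (linfun_contDiffOn p U) u v hz, linfun_pdd]
  ring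

set_option maxHeartbeats 1000000 in
/-- ABP-type estimate: a subsolution on a domain of small measure whose
superlevel sets are compact is nonpositive. -/
lemma abp_small_measure
    (D : Set (ℝ×ℝ)) (hD : IsOpen D)
    (a11 a12 a21 a22 b1 b2 c0 : ℝ×ℝ→ℝ)
    (a₀ B C R : ℝ) (ha₀ : 0 < a₀) (hB : 0 ≤ B) (hC : 0 ≤ C) (hR : 0 < R)
    (hRD : ∀ z ∈ D, |z.1| ≤ R ∧ |z.2| ≤ R)
    (hb : ∀ z ∈ D, |b1 z| ≤ B ∧ |b2 z| ≤ B) (hc : ∀ z ∈ D, |c0 z| ≤ C)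
    (hell : ∀ z ∈ D, ∀ ξ₁ ξ₂ : ℝ, a₀*(ξ₁^2+ξ₂^2)
       ≤ a11 z*ξ₁^2 + (a12 z + a21 z)*ξ₁*ξ₂ + a22 z*ξ₂^2)
    (v : ℝ×ℝ→ℝ) (hv : ContDiffOn ℝ 2 v D)
    (hpde : ∀ z ∈ D, 0 ≤ Lop a11 a12 a21 a22 b1 b2 c0 v z)
    (hcpt : ∀ c : ℝ, 0 < c → IsCompact {z | z ∈ D ∧ c ≤ v z})
    (hsmall : (volume D).toReal * (B/(4*(R+1)) + C)^2 < a₀^2/(4*(R+1)^2)) :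
    ∀ z ∈ D, v z ≤ 0 := by
  set cB := B/(4*(R+1)) + C with hcBdef
  clear_value cB
  intro z₀ hz₀
  by_contra hpos0
  push_neg at hpos0
  have hvc : ContinuousOn v D := hv.continuousOn
  have hR1 : (0:ℝ) < R + 1 := by linarith
  have hcB0 : 0 ≤ cB := by rw [hcBdef]; positivity
  -- the maximum M of v over D, attained at zs
  have hS0 : IsCompact {z | z ∈ D ∧ v z₀ ≤ v z} := hcpt _ hpos0
  have hS0sub : {z | z ∈ D ∧ v z₀ ≤ v z} ⊆ D := fun z hz => hz.1
  obtain ⟨zs, hzsS, hmax0⟩ := hS0.exists_isMaxOn ⟨z₀, hz₀, le_rfl⟩ (hvc.mono hS0sub)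
  set M := v zs with hMdef
  clear_value M
  have hzsD : zs ∈ D := hzsS.1
  have hMpos : 0 < M := by rw [hMdef]; exact lt_of_lt_of_le hpos0 hzsS.2
  have hmaxD : ∀ z ∈ D, v z ≤ M := by
    intro z hz
    rw [hMdef]
    by_cases h : v z₀ ≤ v z
    · exact hmax0 ⟨hz, h⟩
    · push_neg at h
      exact le_trans h.le hzsS.2
  -- constants
  set ρ := M/(8*(R+1)) with hρdef
  clear_value ρ
  have hρpos : 0 < ρ := by rw [hρdef]; exact div_pos hMpos (by linarith)
  -- the superlevel compact set S
  have hScpt : IsCompact {z | z ∈ D ∧ M/2 ≤ v z} := hcpt _ (by linarith only [hMpos])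
  set S := {z | z ∈ D ∧ M/2 ≤ v z} with hSdef
  have hSsub : S ⊆ D := fun z hz => hz.1
  have hzsSmem : zs ∈ S := ⟨hzsD, by rw [hMdef]; rw [hMdef] at hMpos; linarith only [hMpos]⟩
  -- the contact set E
  set E := {z | z ∈ D ∧ 0 < v z} ∩ ({z | z ∈ D ∧ |pdx v z| ≤ ρ} ∩ ({z | z ∈ D ∧ |pdy v z| ≤ ρ}
    ∩ ({z | z ∈ D ∧ pdx (pdx v) z ≤ 0} ∩ ({z | z ∈ D ∧ pdy (pdy v) z ≤ 0}
    ∩ ({z | z ∈ D ∧ pdx (pdy v) z ≤ pdy (pdx v) z} ∩ ({z | z ∈ D ∧ pdy (pdx v) z ≤ pdx (pdy v) z}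
    ∩ {z | z ∈ D ∧ (pdy (pdx v) z)^2 ≤ pdx (pdx v) z * pdy (pdy v) z})))))) with hEdef
  have hEsubD : E ⊆ D := fun z hz => hz.1.1
  -- continuity of derivatives on D
  have hFc : ContinuousOn (fderiv ℝ v) D := hv.continuousOn_fderiv_of_isOpen hD one_le_two
  have hg1c : ContinuousOn (fun z => pdx v z) D := hFc.clm_apply continuousOn_const
  have hg2c : ContinuousOn (fun z => pdy v z) D := hFc.clm_apply continuousOn_const
  have hv1 : ContDiffOn ℝ 1 (fderiv ℝ v) D := hv.fderiv_of_isOpen hD (by norm_num)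
  have hpdx1 : ContDiffOn ℝ 1 (fun z => pdx v z) D := hv1.clm_apply contDiffOn_const
  have hpdy1 : ContDiffOn ℝ 1 (fun z => pdy v z) D := hv1.clm_apply contDiffOn_const
  have hxxc : ContinuousOn (fun z => pdx (pdx v) z) D :=
    (hpdx1.continuousOn_fderiv_of_isOpen hD le_rfl).clm_apply continuousOn_const
  have hxyc : ContinuousOn (fun z => pdx (pdy v) z) D :=
    (hpdy1.continuousOn_fderiv_of_isOpen hD le_rfl).clm_apply continuousOn_const
  have hyxc : ContinuousOn (fun z => pdy (pdx v) z) D :=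
    (hpdx1.continuousOn_fderiv_of_isOpen hD le_rfl).clm_apply continuousOn_const
  have hyyc : ContinuousOn (fun z => pdy (pdy v) z) D :=
    (hpdy1.continuousOn_fderiv_of_isOpen hD le_rfl).clm_apply continuousOn_const
  -- E is measurable
  have hEmeas : MeasurableSet E := by
    rw [hEdef]
    refine MeasurableSet.inter ?_ (MeasurableSet.inter ?_ (MeasurableSet.inter ?_
      (MeasurableSet.inter ?_ (MeasurableSet.inter ?_ (MeasurableSet.inter ?_
      (MeasurableSet.inter ?_ ?_))))))
    · have hopen : IsOpen (D ∩ v⁻¹' (Ioi 0)) := hvc.isOpen_inter_preimage hD isOpen_Ioi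
      have : {z | z ∈ D ∧ 0 < v z} = D ∩ v⁻¹' (Ioi 0) := by ext z; simp [mem_preimage]
      rw [this]; exact hopen.measurableSet
    · exact measurableSet_le_on hD hg1c.abs continuousOn_const
    · exact measurableSet_le_on hD hg2c.abs continuousOn_const
    · exact measurableSet_le_on hD hxxc continuousOn_const
    · exact measurableSet_le_on hD hyyc continuousOn_const
    · exact measurableSet_le_on hD hxyc hyxc
    · exact measurableSet_le_on hD hyxc hxyc
    · exact measurableSet_le_on hD (hyxc.pow 2) (hxxc.mul hyyc)
  -- the gradient map
  set G : ℝ×ℝ → ℝ×ℝ := fun z => (pdx v z, pdy v z) with hGdef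
  -- Step A: ball(0, ρ) is contained in the gradient image of E
  have hball_sub : Metric.ball (0:ℝ×ℝ) ρ ⊆ G '' E := by
    rintro p hp
    rw [Metric.mem_ball, dist_zero_right] at hp
    have hp1 : |p.1| < ρ := lt_of_le_of_lt (by simpa [Real.norm_eq_abs] using norm_fst_le p) hp
    have hp2 : |p.2| < ρ := lt_of_le_of_lt (by simpa [Real.norm_eq_abs] using norm_snd_le p) hp
    set vp : ℝ×ℝ → ℝ := fun w => v w - (p.1*w.1 + p.2*w.2) with hvpdef
    clear_value vp
    have hvp2 : ContDiffOn ℝ 2 vp D := by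
      rw [hvpdef]; exact hv.sub (linfun_contDiffOn p D)
    have hℓbd : ∀ z ∈ D, |p.1*z.1 + p.2*z.2| ≤ M/4 := by
      intro z hz
      obtain ⟨hz1, hz2⟩ := hRD z hz
      have h1 := abs_add_le (p.1*z.1) (p.2*z.2)
      have h2 : |p.1*z.1| ≤ ρ * R := by
        rw [abs_mul]; exact mul_le_mul hp1.le hz1 (abs_nonneg _) hρpos.le
      have h3 : |p.2*z.2| ≤ ρ * R := by
        rw [abs_mul]; exact mul_le_mul hp2.le hz2 (abs_nonneg _) hρpos.le
      have h4 : ρ * R ≤ M/8 := by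
        rw [hρdef, div_mul_eq_mul_div, div_le_div_iff₀ (by linarith) (by norm_num)]
        linarith only [hMpos]
      linarith only [h1, h2, h3, h4]
    have hvpc : ContinuousOn vp S := by
      rw [hvpdef]
      exact (hvc.sub ((continuousOn_const.mul continuous_fst.continuousOn).add
        (continuousOn_const.mul continuous_snd.continuousOn))).mono hSsub
    obtain ⟨zp, hzpS, hmaxp⟩ := hScpt.exists_isMaxOn ⟨zs, hzsSmem⟩ hvpc
    have hzpD : zp ∈ D := hzpS.1
    have hkey1 : 3*(M/4) ≤ vp zs := by
      have habs := (abs_le.mp (hℓbd zs hzsD)).2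
      have heq : vp zs = M - (p.1*zs.1 + p.2*zs.2) := by simp only [hvpdef, hMdef]
      linarith only [habs, heq]
    have hmaxpD : IsMaxOn vp D zp := by
      rw [isMaxOn_iff]
      intro z hz
      by_cases hcase : M/2 ≤ v z
      · exact hmaxp ⟨hz, hcase⟩
      · push_neg at hcase
        have h5 := (abs_le.mp (hℓbd z hz)).1
        have h6 : vp z = v z - (p.1*z.1 + p.2*z.2) := by rw [hvpdef]
        have h7 : vp zs ≤ vp zp := hmaxp hzsSmem
        have h8 : vp z ≤ v z + M/4 := by rw [h6]; linarith only [h5]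
        have h9 : vp z < 3*(M/4) := by linarith only [h8, hcase]
        have h10 : 3*(M/4) ≤ vp zp := le_trans hkey1 h7
        exact le_trans h9.le h10
    have hlocmax : IsLocalMax vp zp := hmaxpD.isLocalMax (hD.mem_nhds hzpD)
    obtain ⟨hgx, hgy, hsymp, hxxp, hyyp, hdiscp⟩ := hess_package_max hD hvp2 hzpD hlocmax
    -- gradient of v at zp equals p
    have hvpdiff : DifferentiableAt ℝ vp zp :=
      (hvp2.differentiableOn two_ne_zero).differentiableAt (hD.mem_nhds hzpD)
    have hldiff : DifferentiableAt ℝ (fun w : ℝ×ℝ => p.1*w.1 + p.2*w.2) zp :=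
      (linfun_hasFDeriv p zp).differentiableAt
    have hveq : v = fun w => vp w + (p.1*w.1 + p.2*w.2) := by
      funext w; simp only [hvpdef]; ring
    have hpdxv : pdx v zp = p.1 := by
      have h8 : pdx v zp = fderiv ℝ vp zp (1,0)
          + fderiv ℝ (fun w : ℝ×ℝ => p.1*w.1 + p.2*w.2) zp (1,0) := by
        show fderiv ℝ v zp (1,0) = _
        conv_lhs => rw [hveq]
        rw [fderiv_fun_add hvpdiff hldiff]
        simp
      rw [h8, linfun_fderiv_apply, show fderiv ℝ vp zp (1,0) = pdx vp zp from rfl, hgx]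
      simp
    have hpdyv : pdy v zp = p.2 := by
      have h8 : pdy v zp = fderiv ℝ vp zp (0,1)
          + fderiv ℝ (fun w : ℝ×ℝ => p.1*w.1 + p.2*w.2) zp (0,1) := by
        show fderiv ℝ v zp (0,1) = _
        conv_lhs => rw [hveq]
        rw [fderiv_fun_add hvpdiff hldiff]
        simp
      rw [h8, linfun_fderiv_apply, show fderiv ℝ vp zp (0,1) = pdy vp zp from rfl, hgy]
      simp
    -- transfer of second partials from vp to v
    have e11 : pdx (pdx vp) zp = pdx (pdx v) zp := by
      rw [hvpdef]; exact second_partials_sub_linear hD hv p hzpD (1,0) (1,0)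
    have e12 : pdx (pdy vp) zp = pdx (pdy v) zp := by
      rw [hvpdef]; exact second_partials_sub_linear hD hv p hzpD (0,1) (1,0)
    have e21 : pdy (pdx vp) zp = pdy (pdx v) zp := by
      rw [hvpdef]; exact second_partials_sub_linear hD hv p hzpD (1,0) (0,1)
    have e22 : pdy (pdy vp) zp = pdy (pdy v) zp := by
      rw [hvpdef]; exact second_partials_sub_linear hD hv p hzpD (0,1) (0,1)
    refine ⟨zp, ?_, ?_⟩
    · rw [hEdef]
      refine ⟨⟨hzpD, lt_of_lt_of_le (by linarith only [hMpos] : (0:ℝ) < M/2) hzpS.2⟩, ⟨hzpD, ?_⟩, ⟨hzpD, ?_⟩,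
        ⟨hzpD, ?_⟩, ⟨hzpD, ?_⟩, ⟨hzpD, ?_⟩, ⟨hzpD, ?_⟩, ⟨hzpD, ?_⟩⟩
      · rw [hpdxv]; exact hp1.le
      · rw [hpdyv]; exact hp2.le
      · rw [← e11]; exact hxxp
      · rw [← e22]; exact hyyp
      · rw [← e12, ← e21]; exact le_of_eq hsymp
      · rw [← e12, ← e21]; exact le_of_eq hsymp.symm
      · rw [← e11, ← e21, ← e22]; exact hdiscp
    · rw [hGdef]
      show (pdx v zp, pdy v zp) = p
      rw [hpdxv, hpdyv]
  -- the derivative of G on E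
  set Φ : ((ℝ×ℝ) →L[ℝ] ℝ) →L[ℝ] (ℝ×ℝ) :=
    (ContinuousLinearMap.apply ℝ ℝ ((1:ℝ),(0:ℝ))).prod
      (ContinuousLinearMap.apply ℝ ℝ ((0:ℝ),(1:ℝ))) with hΦdef
  set A : ℝ×ℝ → ((ℝ×ℝ) →L[ℝ] (ℝ×ℝ)) := fun z => Φ.comp (fderiv ℝ (fderiv ℝ v) z) with hAdef
  have hGd : ∀ z ∈ E, HasFDerivWithinAt G (A z) E z := by
    intro z hz
    have hzD := hEsubD hz
    have h := Φ.hasFDerivAt.comp z (fderiv_diffAt hD hv hzD).hasFDerivAt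
    exact h.hasFDerivWithinAt
  have harea := addHaar_image_le_lintegral_abs_det_fderiv volume hEmeas hGd
  -- pointwise bound on the determinant over E
  have hdetbd : ∀ z ∈ E, ENNReal.ofReal |(A z).det| ≤ ENNReal.ofReal ((M*cB/a₀/2)^2) := by
    intro z hz
    have hzD := hEsubD hz
    obtain ⟨⟨_, hv0⟩, ⟨_, hb1'⟩, ⟨_, hb2'⟩, ⟨_, hxx'⟩, ⟨_, hyy'⟩, ⟨_, hs1⟩, ⟨_, hs2⟩,
      ⟨_, hdisc'⟩⟩ := hz
    have hsymz : pdx (pdy v) z = pdy (pdx v) z := le_antisymm hs1 hs2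
    have hA1 : ((A z) ((1:ℝ),(0:ℝ))).1 = pdx (pdx v) z :=
      (second_partial hD hv hzD (1,0) (1,0)).symm
    have hA2 : ((A z) ((0:ℝ),(1:ℝ))).2 = pdy (pdy v) z :=
      (second_partial hD hv hzD (0,1) (0,1)).symm
    have hA3 : ((A z) ((0:ℝ),(1:ℝ))).1 = pdy (pdx v) z :=
      (second_partial hD hv hzD (1,0) (0,1)).symm
    have hA4 : ((A z) ((1,0):ℝ×ℝ)).2 = pdx (pdy v) z :=
      (second_partial hD hv hzD (0,1) (1,0)).symm
    have hdet : (A z).det = pdx (pdx v) z * pdy (pdy v) z - (pdy (pdx v) z)^2 := by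
      rw [clm_det_eq, hA1, hA2, hA3, hA4, hsymz]; ring
    -- PDE inequality
    have hLz := hpde z hzD
    simp only [Lop] at hLz
    rw [hsymz] at hLz
    -- bounds on lower order terms
    have hbb1 : b1 z * pdx v z ≤ B * ρ := by
      have h9 : |b1 z * pdx v z| ≤ B * ρ := by
        rw [abs_mul]; exact mul_le_mul (hb z hzD).1 hb1' (abs_nonneg _) hB
      linarith only [h9, le_abs_self (b1 z * pdx v z)]
    have hbb2 : b2 z * pdy v z ≤ B * ρ := by
      have h9 : |b2 z * pdy v z| ≤ B * ρ := by
        rw [abs_mul]; exact mul_le_mul (hb z hzD).2 hb2' (abs_nonneg _) hB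
      linarith only [h9, le_abs_self (b2 z * pdy v z)]
    have hcc : c0 z * v z ≤ C * M := by
      have h9 : c0 z ≤ C := le_trans (le_abs_self _) (hc z hzD)
      have h10 : v z ≤ M := hmaxD z hzD
      calc c0 z * v z ≤ C * v z := mul_le_mul_of_nonneg_right h9 hv0.le
      _ ≤ C * M := mul_le_mul_of_nonneg_left h10 hC
    -- trace inequality
    have hform : ∀ ξ₁ ξ₂ : ℝ, a₀*(ξ₁^2+ξ₂^2)
        ≤ a11 z*ξ₁^2 + 2*((a12 z + a21 z)/2)*ξ₁*ξ₂ + a22 z*ξ₂^2 := by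
      intro ξ₁ ξ₂
      have h9 := hell z hzD ξ₁ ξ₂
      have h10 : 2*((a12 z + a21 z)/2)*ξ₁*ξ₂ = (a12 z + a21 z)*ξ₁*ξ₂ := by ring
      linarith only [h9, h10]
    have htr := trace_nonpos hform hxx' hyy' hdisc'
    -- combine: -(X+Z) ≤ M*cB/a₀
    have hsum : -(pdx (pdx v) z + pdy (pdy v) z) ≤ M*cB/a₀ := by
      rw [le_div_iff₀ ha₀]
      have hMB : M*cB = B*M/(4*(R+1)) + C*M := by rw [hcBdef]; ring
      have hBρ : 2*(B*ρ) = B*M/(4*(R+1)) := by rw [hρdef]; field_simp; ring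
      linarith only [hLz, htr, hbb1, hbb2, hcc, hMB, hBρ]
    have h8 : 0 ≤ -(pdx (pdx v) z + pdy (pdy v) z) := by linarith only [hxx', hyy']
    have hfin : |(A z).det| ≤ (M*cB/a₀/2)^2 := by
      rw [hdet, abs_of_nonneg (by linarith only [hdisc']
        : (0:ℝ) ≤ pdx (pdx v) z * pdy (pdy v) z - (pdy (pdx v) z)^2)]
      have t1 := mul_self_le_mul_self h8 hsum
      linarith only [t1, sq_nonneg (pdx (pdx v) z - pdy (pdy v) z), sq_nonneg (pdy (pdx v) z), hdisc']
    exact ENNReal.ofReal_le_ofReal hfin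
  -- integral bound
  have hint : (∫⁻ z in E, ENNReal.ofReal |(A z).det| ∂volume)
      ≤ ENNReal.ofReal ((M*cB/a₀/2)^2) * volume E := by
    calc (∫⁻ z in E, ENNReal.ofReal |(A z).det| ∂volume)
        ≤ ∫⁻ _ in E, ENNReal.ofReal ((M*cB/a₀/2)^2) ∂volume :=
          setLIntegral_mono' hEmeas hdetbd
      _ = ENNReal.ofReal ((M*cB/a₀/2)^2) * volume E := setLIntegral_const _ _
  have hED : volume E ≤ volume D := measure_mono hEsubD
  have hDfin : volume D ≠ ⊤ := by
    have hsub : D ⊆ Icc ((-R,-R) : ℝ×ℝ) ((R,R) : ℝ×ℝ) := by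
      intro z hz
      obtain ⟨h1, h2⟩ := hRD z hz
      obtain ⟨h1a, h1b⟩ := abs_le.mp h1
      obtain ⟨h2a, h2b⟩ := abs_le.mp h2
      exact ⟨⟨h1a, h2a⟩, ⟨h1b, h2b⟩⟩
    exact ne_top_of_le_ne_top (IsCompact.measure_lt_top isCompact_Icc).ne (measure_mono hsub)
  -- ball volume
  have hballvol : volume (Metric.ball (0:ℝ×ℝ) ρ)
      = ENNReal.ofReal (2*ρ) * ENNReal.ofReal (2*ρ) := by
    have h0 : volume (Metric.ball (0:ℝ×ℝ) ρ)
        = volume (Metric.ball (0:ℝ) ρ ×ˢ Metric.ball (0:ℝ) ρ) := by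
      rw [ball_prod_same, Prod.mk_zero_zero]
    rw [h0, ← Real.volume_ball 0 ρ]
    exact (Measure.volume_eq_prod ℝ ℝ) ▸ Measure.prod_prod _ _
  have hchain : ENNReal.ofReal ((2*ρ)*(2*ρ))
      ≤ ENNReal.ofReal ((M*cB/a₀/2)^2 * (volume D).toReal) := by
    rw [ENNReal.ofReal_mul (by linarith only [hρpos] : (0:ℝ) ≤ 2*ρ), ENNReal.ofReal_mul (by positivity : (0:ℝ) ≤ (M*cB/a₀/2)^2),
      ENNReal.ofReal_toReal hDfin]
    calc ENNReal.ofReal (2*ρ) * ENNReal.ofReal (2*ρ)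
        = volume (Metric.ball (0:ℝ×ℝ) ρ) := hballvol.symm
      _ ≤ volume (G '' E) := measure_mono hball_sub
      _ ≤ ∫⁻ z in E, ENNReal.ofReal |(A z).det| ∂volume := harea
      _ ≤ ENNReal.ofReal ((M*cB/a₀/2)^2) * volume E := hint
      _ ≤ ENNReal.ofReal ((M*cB/a₀/2)^2) * volume D := mul_le_mul_right hED _
  have hreal : (2*ρ)*(2*ρ) ≤ (M*cB/a₀/2)^2 * (volume D).toReal :=
    (ENNReal.ofReal_le_ofReal_iff (by positivity)).mp hchain
  -- final contradiction
  set m := (volume D).toReal with hmdef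
  clear_value m
  have hm0 : 0 ≤ m := by rw [hmdef]; exact ENNReal.toReal_nonneg
  have hsmall' : m * cB^2 * (4*(R+1)^2) < a₀^2 := (lt_div_iff₀ (mul_pos (by norm_num : (0:ℝ) < 4) (pow_pos hR1 2))).mp hsmall
  have hexp : (2*ρ)*(2*ρ) = M^2/(16*(R+1)^2) := by rw [hρdef]; field_simp; ring
  have hexp2 : (M*cB/a₀/2)^2 * m = M^2*cB^2*m/(4*a₀^2) := by field_simp; ring
  rw [hexp, hexp2] at hreal
  rw [div_le_div_iff₀ (mul_pos (by norm_num : (0:ℝ) < 16) (pow_pos hR1 2)) (mul_pos (by norm_num : (0:ℝ) < 4) (pow_pos ha₀ 2))] at hreal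
  -- hreal : M^2 * (4*a₀^2) ≤ M^2*cB^2*m*(16*(R+1)^2)
  have hM4 : (0:ℝ) < 4*(M*M) := by have := mul_pos hMpos hMpos; linarith only [this]
  have hstep := mul_lt_mul_of_pos_left hsmall' hM4
  linarith only [hstep, hreal]
set_option maxHeartbeats 1000000 in
/-- Key gluing step: if `w ≤ γ φ` on a compact `K ⊆ Ω` with small complement,
then `w ≤ γ φ` on all of `Ω`. -/
lemma key_step (Ω : Set (ℝ×ℝ)) (hΩopen : IsOpen Ω) (hΩbdd : Bornology.IsBounded Ω)
    (a11 a12 a21 a22 b1 b2 c0 : ℝ×ℝ→ℝ)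
    (a₀ B C R : ℝ) (ha₀ : 0 < a₀) (hB : 0 ≤ B) (hC : 0 ≤ C) (hR : 0 < R)
    (hRΩ : ∀ z ∈ Ω, |z.1| ≤ R ∧ |z.2| ≤ R)
    (hbΩ : ∀ z ∈ Ω, |b1 z| ≤ B ∧ |b2 z| ≤ B) (hcΩ : ∀ z ∈ Ω, |c0 z| ≤ C)
    (hellΩ : ∀ z ∈ Ω, ∀ ξ₁ ξ₂ : ℝ, a₀*(ξ₁^2+ξ₂^2)
       ≤ a11 z*ξ₁^2 + (a12 z + a21 z)*ξ₁*ξ₂ + a22 z*ξ₂^2)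
    (w : ℝ×ℝ→ℝ) (hw2 : ContDiffOn ℝ 2 w Ω) (hwcont : ContinuousOn w (closure Ω))
    (hsuper : ∀ z ∈ Ω, 0 ≤ Lop a11 a12 a21 a22 b1 b2 c0 w z)
    (hwbd : ∀ z ∈ frontier Ω, w z ≤ 0)
    (φ : ℝ×ℝ→ℝ) (hφ2 : ContDiffOn ℝ 2 φ Ω) (hφpos : ∀ z ∈ Ω, 0 < φ z)
    (lam : ℝ) (hlam : 0 < lam)
    (hφsuper : ∀ z ∈ Ω, Lop a11 a12 a21 a22 b1 b2 c0 φ z + lam * φ z ≤ 0)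
    (K : Set (ℝ×ℝ)) (hKcpt : IsCompact K) (hKsub : K ⊆ Ω)
    (hsmall : (volume (Ω \ K)).toReal * (B/(4*(R+1)) + C)^2 < a₀^2/(4*(R+1)^2))
    (γ : ℝ) (hγ0 : 0 ≤ γ) (hγK : ∀ z ∈ K, w z ≤ γ * φ z) :
    ∀ z ∈ Ω, w z ≤ γ * φ z := by
  have hDopen : IsOpen (Ω \ K) := hΩopen.sdiff hKcpt.isClosed
  have hDsub : Ω \ K ⊆ Ω := diff_subset
  -- the subsolution v = w - γ φ
  have hv : ContDiffOn ℝ 2 (fun z => w z - γ * φ z) (Ω \ K) :=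
    (hw2.sub (contDiffOn_const.mul hφ2)).mono hDsub
  have hpde : ∀ z ∈ Ω \ K, 0 ≤ Lop a11 a12 a21 a22 b1 b2 c0 (fun z => w z - γ * φ z) z := by
    intro z hz
    have hzΩ : z ∈ Ω := hDsub hz
    have hfeq : (fun z => w z - γ * φ z) = (fun z => 1 * w z + (-γ) * φ z) := by
      funext z'; ring
    rw [hfeq, Lop_comb a11 a12 a21 a22 b1 b2 c0 hΩopen hw2 hφ2 hzΩ]
    have h1 := hφsuper z hzΩ
    have h2 := hsuper z hzΩ
    have h3 : γ * (Lop a11 a12 a21 a22 b1 b2 c0 φ z) ≤ γ * (-(lam * φ z)) :=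
      mul_le_mul_of_nonneg_left (by linarith only [h1]) hγ0
    have h4 : 0 ≤ γ * (lam * φ z) :=
      mul_nonneg hγ0 (mul_nonneg hlam.le (hφpos z hzΩ).le)
    linarith only [h2, h3, h4]
  have hcpt : ∀ c : ℝ, 0 < c → IsCompact {z | z ∈ Ω \ K ∧ c ≤ w z - γ * φ z} := by
    intro c hc
    have hScΩ : {z | z ∈ Ω \ K ∧ c ≤ w z - γ * φ z} ⊆ Ω := fun z hz => hz.1.1
    have hScbdd : Bornology.IsBounded {z | z ∈ Ω \ K ∧ c ≤ w z - γ * φ z} :=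
      hΩbdd.subset hScΩ
    have hclosed : IsClosed {z | z ∈ Ω \ K ∧ c ≤ w z - γ * φ z} := by
      apply isClosed_of_closure_subset
      intro q hq
      have hqclΩ : q ∈ closure Ω :=
        closure_mono hScΩ hq
      have hT : c ≤ w q := by
        have hTclosed : IsClosed (closure Ω ∩ w⁻¹' (Ici c)) :=
          hwcont.preimage_isClosed_of_isClosed isClosed_closure isClosed_Ici
        have hsub : {z | z ∈ Ω \ K ∧ c ≤ w z - γ * φ z} ⊆ closure Ω ∩ w⁻¹' (Ici c) := by
          intro z hz
          have hzΩ : z ∈ Ω := hScΩ hz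
          refine ⟨subset_closure hzΩ, ?_⟩
          have h1 : c ≤ w z - γ * φ z := hz.2
          have h2 : 0 ≤ γ * φ z := mul_nonneg hγ0 (hφpos z hzΩ).le
          simp only [mem_preimage, mem_Ici]
          linarith only [h1, h2]
        exact (hTclosed.closure_subset_iff.mpr hsub hq).2
      have hqΩ : q ∈ Ω := by
        by_contra hqn
        have hqf : q ∈ frontier Ω := by rw [hΩopen.frontier_eq]; exact ⟨hqclΩ, hqn⟩
        have := hwbd q hqf
        linarith only [hT, this, hc]
      have hwc : ContinuousAt w q :=
        hwcont.continuousAt (mem_nhds_iff.mpr ⟨Ω, subset_closure, hΩopen, hqΩ⟩)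
      have hφc : ContinuousAt φ q := hφ2.continuousOn.continuousAt (hΩopen.mem_nhds hqΩ)
      have hvc : ContinuousAt (fun z => w z - γ * φ z) q := hwc.sub (continuousAt_const.mul hφc)
      have hvq : c ≤ w q - γ * φ q := by
        by_contra hlt
        push_neg at hlt
        have hev : {z : ℝ×ℝ | w z - γ * φ z < c} ∈ nhds q :=
          hvc.eventually_lt_const hlt
        obtain ⟨z', hz'⟩ := (mem_closure_iff_nhds.mp hq _ hev)
        have h1 : w z' - γ * φ z' < c := hz'.1
        have h2 : c ≤ w z' - γ * φ z' := hz'.2.2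
        linarith only [h1, h2]
      have hqK : q ∉ K := by
        intro hqK
        have h1 := hγK q hqK
        have h2 : 0 < φ q := hφpos q hqΩ
        linarith only [hvq, h1, hc]
      exact ⟨⟨hqΩ, hqK⟩, hvq⟩
    exact (hScbdd.isCompact_closure).of_isClosed_subset hclosed subset_closure
  have habp := abp_small_measure (Ω \ K) hDopen a11 a12 a21 a22 b1 b2 c0 a₀ B C R
    ha₀ hB hC hR (fun z hz => hRΩ z (hDsub hz)) (fun z hz => hbΩ z (hDsub hz))
    (fun z hz => hcΩ z (hDsub hz)) (fun z hz => hellΩ z (hDsub hz))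
    (fun z => w z - γ * φ z) hv hpde hcpt hsmall
  intro z hz
  by_cases hzK : z ∈ K
  · exact hγK z hzK
  · have h5 : w z - γ * φ z ≤ 0 := habp z ⟨hz, hzK⟩
    linarith only [h5]

end Aux

set_option maxHeartbeats 1000000 in
/-- Positivity of the principal eigenvalue implies the weak maximum principle:
if `λ₁(𝓛, Ω) > 0`, `𝓛w ≥ 0` in `Ω` and `w ≤ 0` on `∂Ω`, then `w ≤ 0` in `Ω`. -/
theorem positive_principal_eigenvalue_implies_maximum_principle
    (Ω : Set (ℝ × ℝ)) (hΩopen : IsOpen Ω) (hΩconn : IsConnected Ω)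
    (hΩbdd : Bornology.IsBounded Ω)
    (a11 a12 a21 a22 b1 b2 c0 : ℝ × ℝ → ℝ)
    (hcoeff : ∀ f ∈ ({a11, a12, a21, a22, b1, b2, c0} : Set (ℝ × ℝ → ℝ)),
      ContinuousOn f Ω ∧ ∃ C, ∀ z ∈ Ω, |f z| ≤ C)
    (a₀ : ℝ) (ha₀pos : 0 < a₀)
    (hell : ∀ z ∈ Ω, ∀ ξ : ℝ × ℝ,
      a₀ * (ξ.1 ^ 2 + ξ.2 ^ 2) ≤ a11 z * ξ.1 ^ 2 + a12 z * ξ.1 * ξ.2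
        + a21 z * ξ.2 * ξ.1 + a22 z * ξ.2 ^ 2)
    (hlam1pos : 0 < lam1 (Lop a11 a12 a21 a22 b1 b2 c0) Ω)
    (w : ℝ × ℝ → ℝ)
    (hw2 : ContDiffOn ℝ 2 w Ω) (hwcont : ContinuousOn w (closure Ω))
    (hsuper : ∀ z ∈ Ω, 0 ≤ Lop a11 a12 a21 a22 b1 b2 c0 w z)
    (hwbd : ∀ z ∈ frontier Ω, w z ≤ 0) :
    ∀ z ∈ Ω, w z ≤ 0 := by
  -- extract an eigen-pair (lam, φ) with lam > 0
  simp only [lam1] at hlam1pos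
  have hne : {lam : ℝ | ∃ φ : ℝ × ℝ → ℝ, ContDiffOn ℝ 2 φ Ω ∧ (∀ z ∈ Ω, 0 < φ z) ∧
      ∀ z ∈ Ω, Lop a11 a12 a21 a22 b1 b2 c0 φ z + lam * φ z ≤ 0}.Nonempty := by
    by_contra h
    rw [not_nonempty_iff_eq_empty] at h
    rw [h, Real.sSup_empty] at hlam1pos
    exact lt_irrefl _ hlam1pos
  have hbdd : BddAbove {lam : ℝ | ∃ φ : ℝ × ℝ → ℝ, ContDiffOn ℝ 2 φ Ω ∧ (∀ z ∈ Ω, 0 < φ z) ∧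
      ∀ z ∈ Ω, Lop a11 a12 a21 a22 b1 b2 c0 φ z + lam * φ z ≤ 0} := by
    by_contra h
    rw [Real.sSup_of_not_bddAbove h] at hlam1pos
    exact lt_irrefl _ hlam1pos
  obtain ⟨lam, hlamS, hlampos⟩ := exists_lt_of_lt_csSup hne hlam1pos
  obtain ⟨φ, hφ2, hφpos, hφsuper⟩ := hlamS
  -- coefficient bounds
  obtain ⟨-, Cb1, hCb1⟩ := hcoeff b1 (by simp)
  obtain ⟨-, Cb2, hCb2⟩ := hcoeff b2 (by simp)
  obtain ⟨-, Cc0, hCc0⟩ := hcoeff c0 (by simp)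
  obtain ⟨B, hB0, hbΩ⟩ : ∃ B : ℝ, 0 ≤ B ∧ ∀ z ∈ Ω, |b1 z| ≤ B ∧ |b2 z| ≤ B := by
    refine ⟨max (max Cb1 Cb2) 0, le_max_right _ _, fun z hz => ⟨?_, ?_⟩⟩
    · exact le_trans (hCb1 z hz) (le_trans (le_max_left _ _) (le_max_left _ _))
    · exact le_trans (hCb2 z hz) (le_trans (le_max_right _ _) (le_max_left _ _))
  obtain ⟨C, hC0, hcΩ⟩ : ∃ C : ℝ, 0 ≤ C ∧ ∀ z ∈ Ω, |c0 z| ≤ C :=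
    ⟨max Cc0 0, le_max_right _ _, fun z hz => le_trans (hCc0 z hz) (le_max_left _ _)⟩
  -- geometric bound
  obtain ⟨R0, hR0⟩ := hΩbdd.exists_norm_le
  obtain ⟨Rb, hRb1, hRbΩ⟩ : ∃ Rb : ℝ, 0 < Rb ∧ ∀ z ∈ Ω, |z.1| ≤ Rb ∧ |z.2| ≤ Rb := by
    refine ⟨max R0 1, lt_max_of_lt_right one_pos, fun z hz => ⟨?_, ?_⟩⟩
    · exact le_trans (le_trans (by rw [← Real.norm_eq_abs]; exact norm_fst_le z) (hR0 z hz))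
        (le_max_left _ _)
    · exact le_trans (le_trans (by rw [← Real.norm_eq_abs]; exact norm_snd_le z) (hR0 z hz))
        (le_max_left _ _)
  -- ellipticity in symmetric form
  have hellsum : ∀ z ∈ Ω, ∀ ξ₁ ξ₂ : ℝ, a₀*(ξ₁^2+ξ₂^2)
      ≤ a11 z*ξ₁^2 + (a12 z + a21 z)*ξ₁*ξ₂ + a22 z*ξ₂^2 := by
    intro z hz ξ₁ ξ₂
    have h9 : a₀ * (ξ₁^2 + ξ₂^2) ≤ a11 z * ξ₁^2 + a12 z * ξ₁ * ξ₂
        + a21 z * ξ₂ * ξ₁ + a22 z * ξ₂^2 := hell z hz (ξ₁, ξ₂)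
    have hr : a12 z * ξ₁ * ξ₂ + a21 z * ξ₂ * ξ₁ = (a12 z + a21 z)*ξ₁*ξ₂ := by ring
    linarith only [h9, hr]
  -- a compact subset with small complement
  have hΩfin : volume Ω ≠ ⊤ :=
    (lt_of_le_of_lt (measure_mono subset_closure) hΩbdd.isCompact_closure.measure_lt_top).ne
  have hRb1' : (0:ℝ) < Rb + 1 := by linarith only [hRb1]
  have hθpos : 0 < a₀^2/(4*(Rb+1)^2) :=
    div_pos (pow_pos ha₀pos 2) (mul_pos (by norm_num) (pow_pos hRb1' 2))
  have hβ1pos : 0 < (B/(4*(Rb+1)) + C)^2 + 1 := by positivity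
  have hδpos : 0 < (a₀^2/(4*(Rb+1)^2))/((B/(4*(Rb+1)) + C)^2 + 1) := div_pos hθpos hβ1pos
  obtain ⟨K, hKsub, hKcpt, hKlt⟩ := hΩopen.measurableSet.exists_isCompact_diff_lt hΩfin
    (ENNReal.ofReal_pos.mpr hδpos).ne'
  have hDfin : volume (Ω \ K) ≠ ⊤ :=
    (lt_of_le_of_lt (measure_mono (diff_subset.trans subset_closure))
      hΩbdd.isCompact_closure.measure_lt_top).ne
  have hmlt : (volume (Ω \ K)).toReal
      < (a₀^2/(4*(Rb+1)^2))/((B/(4*(Rb+1)) + C)^2 + 1) :=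
    (ENNReal.lt_ofReal_iff_toReal_lt hDfin).mp hKlt
  have hsmall : (volume (Ω \ K)).toReal * (B/(4*(Rb+1)) + C)^2 < a₀^2/(4*(Rb+1)^2) := by
    have t1 := mul_lt_mul_of_pos_right hmlt hβ1pos
    have t2 : (a₀^2/(4*(Rb+1)^2))/((B/(4*(Rb+1)) + C)^2 + 1) * ((B/(4*(Rb+1)) + C)^2 + 1)
        = a₀^2/(4*(Rb+1)^2) := div_mul_cancel₀ _ hβ1pos.ne'
    have t3 : (0:ℝ) ≤ (volume (Ω \ K)).toReal := ENNReal.toReal_nonneg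
    nlinarith [t1, t2, t3]
  by_cases hK : K.Nonempty
  · -- the ratio maximum over K
    have hwK : ContinuousOn (fun z => w z / φ z) K :=
      (hwcont.mono (hKsub.trans subset_closure)).div (hφ2.continuousOn.mono hKsub)
        (fun z hz => (hφpos z (hKsub hz)).ne')
    obtain ⟨z₁, hz₁K, hmax₁⟩ := hKcpt.exists_isMaxOn hK hwK
    have hγK : ∀ z ∈ K, w z ≤ (max 0 (w z₁ / φ z₁)) * φ z := by
      intro z hz
      have h1 : w z / φ z ≤ w z₁ / φ z₁ := hmax₁ hz
      have h2 : 0 < φ z := hφpos z (hKsub hz)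
      have h3 : w z / φ z ≤ max 0 (w z₁ / φ z₁) := le_trans h1 (le_max_right _ _)
      calc w z = (w z / φ z) * φ z := (div_mul_cancel₀ (w z) h2.ne').symm
      _ ≤ (max 0 (w z₁ / φ z₁)) * φ z := mul_le_mul_of_nonneg_right h3 h2.le
    have key := key_step Ω hΩopen hΩbdd a11 a12 a21 a22 b1 b2 c0 a₀ B C Rb ha₀pos hB0 hC0 hRb1
      hRbΩ hbΩ hcΩ hellsum w hw2 hwcont hsuper hwbd φ hφ2 hφpos lam hlampos hφsuper
      K hKcpt hKsub hsmall (max 0 (w z₁ / φ z₁)) (le_max_left _ _) hγK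
    by_cases hγc : w z₁ / φ z₁ ≤ 0
    · intro z hz
      have h0 : max 0 (w z₁ / φ z₁) = 0 := max_eq_left hγc
      have hkz := key z hz
      rw [h0] at hkz
      linarith only [hkz]
    · exfalso
      push_neg at hγc
      have hγeq : max 0 (w z₁ / φ z₁) = w z₁ / φ z₁ := max_eq_right hγc.le
      obtain ⟨γ, hγeq2⟩ : ∃ γ : ℝ, γ = w z₁ / φ z₁ := ⟨_, rfl⟩
      have hγpos : 0 < γ := hγeq2 ▸ hγc
      have key' : ∀ z ∈ Ω, w z ≤ γ * φ z := by
        intro z hz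
        have hkz := key z hz
        rw [hγeq] at hkz
        rw [hγeq2]
        exact hkz
      have hz₁Ω : z₁ ∈ Ω := hKsub hz₁K
      have hφz₁ : 0 < φ z₁ := hφpos z₁ hz₁Ω
      have hh0 : γ * φ z₁ - w z₁ = 0 := by rw [hγeq2, div_mul_cancel₀ _ hφz₁.ne', sub_self]
      have hh2 : ContDiffOn ℝ 2 (fun z => γ * φ z - w z) Ω :=
        (contDiffOn_const.mul hφ2).sub hw2
      have hlocmin : IsLocalMin (fun z => γ * φ z - w z) z₁ := by
        have hev : ∀ᶠ z in nhds z₁, γ * φ z₁ - w z₁ ≤ γ * φ z - w z := by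
          filter_upwards [hΩopen.mem_nhds hz₁Ω] with z hz
          have h1 := key' z hz
          linarith only [h1, hh0]
        exact hev
      obtain ⟨hgx, hgy, hsym, hxx, hyy, hdisc⟩ := hess_package_min hΩopen hh2 hz₁Ω hlocmin
      have hform : ∀ ξ₁ ξ₂ : ℝ, a₀*(ξ₁^2+ξ₂^2)
          ≤ a11 z₁*ξ₁^2 + 2*((a12 z₁ + a21 z₁)/2)*ξ₁*ξ₂ + a22 z₁*ξ₂^2 := by
        intro ξ₁ ξ₂
        have h9 := hellsum z₁ hz₁Ω ξ₁ ξ₂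
        have h10 : 2*((a12 z₁ + a21 z₁)/2)*ξ₁*ξ₂ = (a12 z₁ + a21 z₁)*ξ₁*ξ₂ := by ring
        linarith only [h9, h10]
      have htr := trace_nonneg hform hxx hyy hdisc
      have hLh : 0 ≤ Lop a11 a12 a21 a22 b1 b2 c0 (fun z => γ * φ z - w z) z₁ := by
        simp only [Lop]
        rw [hgx, hgy, hsym]
        have t5 : 0 ≤ a₀ * (pdx (pdx (fun z => γ * φ z - w z)) z₁
            + pdy (pdy (fun z => γ * φ z - w z)) z₁) :=
          mul_nonneg ha₀pos.le (by linarith only [hxx, hyy])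
        have hc0 : c0 z₁ * (γ * φ z₁ - w z₁) = 0 := by rw [hh0]; ring
        linarith only [htr, t5, hc0]
      have hcomb : Lop a11 a12 a21 a22 b1 b2 c0 (fun z => γ * φ z - w z) z₁
          = γ * Lop a11 a12 a21 a22 b1 b2 c0 φ z₁
            + (-1) * Lop a11 a12 a21 a22 b1 b2 c0 w z₁ := by
        have hfeq : (fun z => γ * φ z - w z) = (fun z => γ * φ z + (-1) * w z) := by
          funext z'; ring
        rw [hfeq]
        exact Lop_comb a11 a12 a21 a22 b1 b2 c0 hΩopen hφ2 hw2 hz₁Ω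
      have h1 := hφsuper z₁ hz₁Ω
      have h2 := hsuper z₁ hz₁Ω
      have h3 : γ * Lop a11 a12 a21 a22 b1 b2 c0 φ z₁ ≤ γ * (-(lam * φ z₁)) :=
        mul_le_mul_of_nonneg_left (by linarith only [h1]) hγpos.le
      have h4 : 0 < γ * (lam * φ z₁) := mul_pos hγpos (mul_pos hlampos hφz₁)
      linarith only [hLh, hcomb, h3, h2, h4]
  · rw [not_nonempty_iff_eq_empty] at hK
    have key := key_step Ω hΩopen hΩbdd a11 a12 a21 a22 b1 b2 c0 a₀ B C Rb ha₀pos hB0 hC0 hRb1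
      hRbΩ hbΩ hcΩ hellsum w hw2 hwcont hsuper hwbd φ hφ2 hφpos lam hlampos hφsuper
      K hKcpt hKsub hsmall 0 le_rfl (fun z hz => ((hK ▸ hz : z ∈ (∅ : Set (ℝ×ℝ)))).elim)
    intro z hz
    have hkz := key z hz
    linarith only [hkz]
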